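/- Let H be a real Hilbert space, C ⊆ H a nonempty closed r-prox-regular set (r > 0), f : H → H a k-Lipschitz continuous function, x₀ ∈ C, and let x(·) be the unique locally absolutely continuous solution of ẋ(t) ∈ f(x(t)) − N(C, x(t)) a.e. on [0,∞) with x(0) = x₀, satisfying ‖ẋ(t) − f(x(t))‖ ≤ ‖f(x(t))‖ a.e. Then for almost every t ∈ [0,∞), ẋ(t) equals the minimal norm element of the set f(x(t)) − N(C, x(t)). -/
import Mathlib


open Set Filter Metric MeasureTheory Topology
open scoped RealInnerProductSpace NNReal ENNReal

variable {H : Type*} [NormedAddCommGroup H] [InnerProductSpace ℝ H] [CompleteSpace H]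

/-- The proximal normal cone of a set `C` at a point `x`:
`ξ ∈ N(C,x)` iff there exist `σ > 0`, `δ > 0` with
`⟪ξ, y - x⟫ ≤ δ ‖y - x‖²` for all `y ∈ C` with `‖y - x‖ ≤ σ`. -/
def proxNormalCone (C : Set H) (x : H) : Set H :=
  {ξ | ∃ σ > (0 : ℝ), ∃ δ > (0 : ℝ), ∀ y ∈ C, ‖y - x‖ ≤ σ → ⟪ξ, y - x⟫ ≤ δ * ‖y - x‖ ^ 2}

/-- `C` is `r`-prox-regular: every point `s` with `d(s,C) < r` has a unique
nearest point `p s` in `C`, and the nearest-point map `p` is continuous on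
the enlargement `U_r(C) = {s | d(s,C) < r}`. -/
def IsProxRegular (C : Set H) (r : ℝ) : Prop :=
  ∃ p : H → H,
    (∀ s : H, infDist s C < r →
      (p s ∈ C ∧ dist s (p s) = infDist s C) ∧
      ∀ y ∈ C, dist s y = infDist s C → y = p s) ∧
    ContinuousOn p {s : H | infDist s C < r}

/-- The set `f(x) - N(C,x)`. -/
def flowSet (C : Set H) (f : H → H) (x : H) : Set H :=
  {v | f x - v ∈ proxNormalCone C x}

/-- `x : ℝ → H` is the (locally absolutely continuous) solution of the differential
inclusion `ẋ(t) ∈ f(x(t)) - N(C, x(t))` a.e. on `[0, ∞)`, `x(0) = x₀`, with a.e.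
derivative `x'`: it starts at `x₀`, stays in `C`, is a locally Bochner integral of
`x'` (local absolute continuity), has derivative `x' t` at a.e. `t ≥ 0`, and
satisfies the inclusion at a.e. `t ≥ 0`. -/
structure IsSolutionOf (C : Set H) (f : H → H) (x₀ : H) (x x' : ℝ → H) : Prop where
  init : x 0 = x₀
  memC : ∀ t ≥ (0 : ℝ), x t ∈ C
  locInt : ∀ T > (0 : ℝ), IntegrableOn x' (Icc 0 T)
  integ : ∀ t ≥ (0 : ℝ), x t = x₀ + ∫ s in (0 : ℝ)..t, x' s
  deriv : ∀ᵐ t ∂(volume.restrict (Ici (0 : ℝ))), HasDerivAt x (x' t) t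
  incl : ∀ᵐ t ∂(volume.restrict (Ici (0 : ℝ))), x' t ∈ flowSet C f (x t)


set_option linter.unusedSectionVars false in
lemma inner_proxNormal_deriv_eq_zero (C : Set H) (x : ℝ → H) (v : H) (t : ℝ) (ht : 0 < t)
    (hmem : ∀ s ≥ (0 : ℝ), x s ∈ C) (hd : HasDerivAt x v t)
    (ζ : H) (hζ : ζ ∈ proxNormalCone C (x t)) : ⟪ζ, v⟫ = 0 := by
  obtain ⟨σ, hσ, δ, hδ, hP⟩ := hζ
  have hslope : Tendsto (slope x t) (𝓝[≠] t) (𝓝 v) := hasDerivAt_iff_tendsto_slope.mp hd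
  have hball : ∀ᶠ s in 𝓝 t, ‖x s - x t‖ ≤ σ := by
    filter_upwards [hd.continuousAt (Metric.closedBall_mem_nhds (x t) hσ)] with s hs
    simpa [Metric.mem_closedBall, dist_eq_norm] using hs
  have hbound : ∀ s, s ≠ t → 0 ≤ s → ‖x s - x t‖ ≤ σ →
      (s - t) * ⟪ζ, slope x t s⟫ ≤ δ * (s - t) ^ 2 * ‖slope x t s‖ ^ 2 := by
    intro s hne hs0 hsb
    have hxs : x s - x t = (s - t) • slope x t s := by
      rw [slope_def_module, smul_inv_smul₀ (sub_ne_zero.mpr hne)]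
    have h1 : ⟪ζ, x s - x t⟫ ≤ δ * ‖x s - x t‖ ^ 2 := hP (x s) (hmem s hs0) hsb
    rw [hxs, real_inner_smul_right, norm_smul, mul_pow, Real.norm_eq_abs, sq_abs] at h1
    nlinarith [h1]
  have ha : Tendsto (fun s : ℝ => s - t) (𝓝[≠] t) (𝓝 0) := by
    have : Tendsto (fun s : ℝ => s - t) (𝓝 t) (𝓝 (t - t)) :=
      (continuous_id.sub continuous_const).tendsto t
    simpa using this.mono_left nhdsWithin_le_nhds
  have hm : Tendsto (fun s => ‖slope x t s‖ ^ 2) (𝓝[≠] t) (𝓝 (‖v‖ ^ 2)) :=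
    (hslope.norm).pow 2
  have hT : Tendsto (fun s => δ * ((s - t) * ‖slope x t s‖ ^ 2)) (𝓝[≠] t) (𝓝 0) := by
    simpa using tendsto_const_nhds.mul (ha.mul hm)
  have hI : Tendsto (fun s => ⟪ζ, slope x t s⟫) (𝓝[≠] t) (𝓝 ⟪ζ, v⟫) :=
    (tendsto_const_nhds : Tendsto (fun _ : ℝ => ζ) _ (𝓝 ζ)).inner hslope
  have hsubR : 𝓝[>] t ≤ 𝓝[≠] t := nhdsWithin_mono t (fun s hs => ne_of_gt hs)
  have hsubL : 𝓝[<] t ≤ 𝓝[≠] t := nhdsWithin_mono t (fun s hs => ne_of_lt hs)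
  have h1 : ⟪ζ, v⟫ ≤ 0 := by
    refine le_of_tendsto_of_tendsto (hI.mono_left hsubR) (hT.mono_left hsubR) ?_
    filter_upwards [self_mem_nhdsWithin, hball.filter_mono (hsubR.trans nhdsWithin_le_nhds)]
      with s hs hsb
    have hst : t < s := hs
    have := hbound s hst.ne' (le_of_lt (ht.trans hst)) hsb
    nlinarith [this, sub_pos.mpr hst]
  have h2 : 0 ≤ ⟪ζ, v⟫ := by
    refine le_of_tendsto_of_tendsto (hT.mono_left hsubL) (hI.mono_left hsubL) ?_
    filter_upwards [Ioo_mem_nhdsLT_of_mem (⟨ht, le_refl t⟩ : t ∈ Ioc 0 t),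
      hball.filter_mono (hsubL.trans nhdsWithin_le_nhds)] with s hs hsb
    have hst : s < t := hs.2
    have := hbound s hst.ne (le_of_lt hs.1) hsb
    nlinarith [this, sub_neg.mpr hst]
  linarith

/-- Theorem 3.5 (i): for a.e. `t ∈ [0,∞)`, `ẋ(t)` is the minimal norm element of
the set `f(x(t)) - N(C, x(t))`. -/
theorem derivative_eq_min_norm (C : Set H) (hC : IsClosed C) (hCne : C.Nonempty)
    (r : ℝ) (hr : 0 < r) (hreg : IsProxRegular C r)
    (f : H → H) (k : ℝ≥0) (hf : LipschitzWith k f)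
    (x₀ : H) (hx₀ : x₀ ∈ C)
    (x x' : ℝ → H) (hsol : IsSolutionOf C f x₀ x x')
    (hbd : ∀ᵐ t ∂(volume.restrict (Ici (0 : ℝ))), ‖x' t - f (x t)‖ ≤ ‖f (x t)‖) :
    ∀ᵐ t ∂(volume.restrict (Ici (0 : ℝ))),
      x' t ∈ flowSet C f (x t) ∧ ∀ u ∈ flowSet C f (x t), ‖x' t‖ ≤ ‖u‖ := by
  
  have h0 : ∀ᵐ t ∂(volume.restrict (Ici (0 : ℝ))), t ≠ 0 := by
    refine ae_iff.mpr ?_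
    have hs : {t : ℝ | ¬t ≠ 0} = {0} := by ext; simp
    rw [hs, Measure.restrict_apply (measurableSet_singleton 0)]
    exact measure_mono_null inter_subset_left (measure_singleton 0)
  filter_upwards [hsol.deriv, hsol.incl, h0, ae_restrict_mem measurableSet_Ici]
    with t hd hi hne hmem
  have ht : 0 < t := lt_of_le_of_ne hmem (Ne.symm hne)
  refine ⟨hi, fun u hu => ?_⟩
  have hz0 : ⟪f (x t) - x' t, x' t⟫ = 0 :=
    inner_proxNormal_deriv_eq_zero C x (x' t) t ht hsol.memC hd _ hi
  have hzu : ⟪f (x t) - u, x' t⟫ = 0 :=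
    inner_proxNormal_deriv_eq_zero C x (x' t) t ht hsol.memC hd _ hu
  rw [inner_sub_left] at hz0 hzu
  have h1 : ⟪x' t, x' t⟫ = ⟪u, x' t⟫ := by linarith
  have h2 : ‖x' t‖ ^ 2 ≤ ‖u‖ * ‖x' t‖ := by
    rw [← real_inner_self_eq_norm_sq, h1]
    exact real_inner_le_norm u (x' t)
  rcases eq_or_lt_of_le (norm_nonneg (x' t)) with h | h
  · rw [← h]; exact norm_nonneg u
  · rw [sq] at h2; exact le_of_mul_le_mul_right h2 h
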